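/- Let k be a field, let n ≥ 1 and r ≥ 1 be integers, let ζ ∈ k be a primitive r-th root of unity, fix j₀ ∈ {1,…,n}, write A = k[X₁,…,Xₙ], and let σ be the k-algebra automorphism of A with σ(X_i) = X_i for i ≠ j₀ and σ(X_{j₀}) = ζ·X_{j₀}. Let Ω = Ω_{A/k} be the module of Kähler differentials of A over k with universal derivation d : A → Ω, and let σ_* : Ω → Ω be the additive map induced functorially by σ (so that σ_*(f · d g) = σ(f) · d(σ(g)) for f, g ∈ A). Then for ω ∈ Ω one has σ_*(ω) = ω if and only if there exist polynomials b₁,…,bₙ ∈ A with σ(b_i) = b_i for all i such that ω = Σ_{i ≠ j₀} b_i · d(X_i) + b_{j₀} · d(X_{j₀}^r). -/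

import Mathlib

open MvPolynomial

section Aux

variable {k : Type*} [Field k] {n : ℕ}

private lemma stmt7_coeff_sigma (ζ : k) (j₀ : Fin n)
    (σ : MvPolynomial (Fin n) k ≃ₐ[k] MvPolynomial (Fin n) k)
    (hσ : ∀ i : Fin n, i ≠ j₀ → σ (X i) = X i)
    (hσ' : σ (X j₀) = C ζ * X j₀) (p : MvPolynomial (Fin n) k) (m : Fin n →₀ ℕ) :
    coeff m (σ p) = ζ ^ (m j₀) * coeff m p := by
  classical
  induction p using MvPolynomial.induction_on generalizing m with
  | C c =>
    have hc : σ (C c) = C c := by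
      rw [← MvPolynomial.algebraMap_eq]; exact σ.commutes c
    rw [hc]
    rcases eq_or_ne m 0 with rfl | hm
    · simp
    · simp [coeff_C, Ne.symm hm]
  | add p q hp hq =>
    simp only [map_add, coeff_add, hp, hq]; ring
  | mul_X p i hp =>
    by_cases hi : i = j₀
    · rw [hi, map_mul, hσ',
        show σ p * (C ζ * X j₀) = C ζ * (σ p * X j₀) from by ring,
        coeff_C_mul, coeff_mul_X', coeff_mul_X']
      by_cases hmem : j₀ ∈ m.support
      · simp only [hmem, if_true, hp]
        have h1 : (m - Finsupp.single j₀ 1 : Fin n →₀ ℕ) j₀ = m j₀ - 1 := by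
          rw [Finsupp.tsub_apply, Finsupp.single_eq_same]
        have h2 : 1 ≤ m j₀ := Nat.one_le_iff_ne_zero.mpr (Finsupp.mem_support_iff.mp hmem)
        have h3 : m j₀ - 1 + 1 = m j₀ := by omega
        have hz : ζ * ζ ^ (m j₀ - 1) = ζ ^ (m j₀) := by
          conv_rhs => rw [← h3]
          rw [pow_succ]; ring
        rw [h1, ← mul_assoc, hz]
      · simp [hmem]
    · rw [map_mul, hσ i hi, coeff_mul_X', coeff_mul_X']
      by_cases hmem : i ∈ m.support
      · simp only [hmem, if_true, hp]
        have h1 : (m - Finsupp.single i 1 : Fin n →₀ ℕ) j₀ = m j₀ := by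
          rw [Finsupp.tsub_apply, Finsupp.single_eq_of_ne (Ne.symm hi), Nat.sub_zero]
        rw [h1]
      · simp [hmem]

private lemma stmt7_factor {r : ℕ} (hr : 1 ≤ r) {ζ : k} (hζ : IsPrimitiveRoot ζ r)
    (j₀ : Fin n)
    (σ : MvPolynomial (Fin n) k ≃ₐ[k] MvPolynomial (Fin n) k)
    (hσ : ∀ i : Fin n, i ≠ j₀ → σ (X i) = X i)
    (hσ' : σ (X j₀) = C ζ * X j₀)
    (a : MvPolynomial (Fin n) k) (ha : C ζ * σ a = a) :
    ∃ c : MvPolynomial (Fin n) k, a = X j₀ ^ (r - 1) * c ∧ σ c = c := by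
  classical
  have hdvd : ∀ m ∈ a.support, r ∣ m j₀ + 1 := by
    intro m hm
    have hcm : coeff m a ≠ 0 := MvPolynomial.mem_support_iff.mp hm
    have h := congrArg (coeff m) ha
    rw [coeff_C_mul, stmt7_coeff_sigma ζ j₀ σ hσ hσ'] at h
    have h1 : ζ ^ (m j₀ + 1) * coeff m a = 1 * coeff m a := by
      conv_rhs => rw [one_mul, ← h]
      rw [pow_succ]; ring
    have h2 : ζ ^ (m j₀ + 1) = 1 := mul_right_cancel₀ hcm h1
    exact (hζ.pow_eq_one_iff_dvd _).mp h2
  set c : MvPolynomial (Fin n) k :=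
    ∑ m ∈ a.support, monomial (m - Finsupp.single j₀ (r - 1)) (coeff m a) with hc
  have hle : ∀ m ∈ a.support, Finsupp.single j₀ (r - 1) ≤ m := by
    intro m hm
    rw [Finsupp.single_le_iff]
    have h4 : r ≤ m j₀ + 1 := Nat.le_of_dvd (by omega) (hdvd m hm)
    omega
  have key : X j₀ ^ (r - 1) * c = a := by
    rw [hc, Finset.mul_sum]
    conv_rhs => rw [a.as_sum]
    refine Finset.sum_congr rfl fun m hm => ?_
    rw [X_pow_eq_monomial, monomial_mul, one_mul, add_tsub_cancel_of_le (hle m hm)]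
  have hXne : (X j₀ : MvPolynomial (Fin n) k) ^ (r - 1) ≠ 0 :=
    pow_ne_zero _ (MvPolynomial.X_ne_zero _)
  refine ⟨c, key.symm, ?_⟩
  apply mul_left_cancel₀ hXne
  have h1 : σ (X j₀ ^ (r - 1) * c) = C (ζ ^ (r - 1)) * X j₀ ^ (r - 1) * σ c := by
    rw [map_mul, map_pow, hσ', mul_pow, ← C_pow]
  have h2 : C ζ * (C (ζ ^ (r - 1)) * X j₀ ^ (r - 1) * σ c) = X j₀ ^ (r - 1) * c := by
    rw [← h1, key, ha]
  have h3 : (ζ : k) ^ r = ζ * ζ ^ (r - 1) := by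
    rw [← pow_succ']; congr 1; omega
  calc X j₀ ^ (r - 1) * σ c
      = C (ζ ^ r) * (X j₀ ^ (r - 1) * σ c) := by
        rw [hζ.pow_eq_one, map_one, one_mul]
    _ = C ζ * (C (ζ ^ (r - 1)) * X j₀ ^ (r - 1) * σ c) := by
        rw [h3, C_mul]; ring
    _ = X j₀ ^ (r - 1) * c := h2

end Aux

set_option maxHeartbeats 1000000 in
/-- Solomon's theorem for regular 1-forms in the étale-local
cyclic model; cf. Corollary 4.1.1.  Let `σ` be the `k`-algebra automorphism of
`A = k[X₁,…,Xₙ]` scaling `X_{j₀}` by a primitive `r`-th root of unity `ζ` and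
fixing the other variables, let `Ω = Ω_{A/k}` with universal derivation `d`,
and let `σ_*` be the additive endomorphism of `Ω` induced functorially by `σ`
(so `σ_*(f · d g) = σ(f) · d(σ(g))`).  Then a 1-form `ω` is `σ_*`-invariant iff
`ω = Σ_{i ≠ j₀} bᵢ · d Xᵢ + b_{j₀} · d(X_{j₀}^r)` with all `bᵢ`
`σ`-invariant polynomials. -/
theorem stmt7 {k : Type*} [Field k] (n r : ℕ) (hn : 1 ≤ n) (hr : 1 ≤ r)
    (ζ : k) (hζ : IsPrimitiveRoot ζ r) (j₀ : Fin n)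
    (σ : MvPolynomial (Fin n) k ≃ₐ[k] MvPolynomial (Fin n) k)
    (hσ : ∀ i : Fin n, i ≠ j₀ → σ (X i) = X i)
    (hσ' : σ (X j₀) = C ζ * X j₀)
    (σstar : KaehlerDifferential k (MvPolynomial (Fin n) k) →+
      KaehlerDifferential k (MvPolynomial (Fin n) k))
    (hσstar : ∀ f g : MvPolynomial (Fin n) k,
      σstar (f • KaehlerDifferential.D k (MvPolynomial (Fin n) k) g) =
        σ f • KaehlerDifferential.D k (MvPolynomial (Fin n) k) (σ g))
    (ω : KaehlerDifferential k (MvPolynomial (Fin n) k)) :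
    σstar ω = ω ↔
      ∃ b : Fin n → MvPolynomial (Fin n) k,
        (∀ i, σ (b i) = b i) ∧
        ω = (∑ i ∈ Finset.univ.erase j₀,
              b i • KaehlerDifferential.D k (MvPolynomial (Fin n) k) (X i)) +
            b j₀ • KaehlerDifferential.D k (MvPolynomial (Fin n) k) (X j₀ ^ r) := by
  classical
  haveI : NeZero r := ⟨by omega⟩
  haveI hrk : NeZero ((r : ℕ) : k) := hζ.neZero'
  set D := KaehlerDifferential.D k (MvPolynomial (Fin n) k) with hD
  set B := KaehlerDifferential.mvPolynomialBasis k (Fin n) with hB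
  have hζr : (C (ζ ^ r) : MvPolynomial (Fin n) k) = 1 := by rw [hζ.pow_eq_one, map_one]
  have hσXr : σ (X j₀ ^ r) = X j₀ ^ r := by
    rw [map_pow, hσ', mul_pow, ← C_pow, hζr, one_mul]
  constructor
  · intro hinv
    set a : Fin n → MvPolynomial (Fin n) k := fun i => B.repr ω i with ha
    set cf : Fin n → MvPolynomial (Fin n) k :=
      fun i => if i = j₀ then C ζ * σ (a j₀) else σ (a i) with hcf
    have hω : ω = ∑ i, a i • B i := (B.sum_repr ω).symm
    have hω' : ω = ∑ i, a i • D (X i) := by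
      rw [hω]
      exact Finset.sum_congr rfl fun i _ => by
        rw [KaehlerDifferential.mvPolynomialBasis_apply]
    have hcfj : cf j₀ = C ζ * σ (a j₀) := by simp [hcf]
    have hcfi : ∀ i, i ≠ j₀ → cf i = σ (a i) := by
      intro i hi; simp only [hcf]; rw [if_neg hi]
    have hDζ : D (C ζ * X j₀) = (C ζ : MvPolynomial (Fin n) k) • D (X j₀) := by
      rw [← MvPolynomial.smul_eq_C_mul, Derivation.map_smul,
        ← algebraMap_smul (MvPolynomial (Fin n) k) ζ (D (X j₀)),
        MvPolynomial.algebraMap_eq]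
    have hσω : σstar ω = ∑ i, cf i • B i := by
      rw [hω', map_sum]
      refine Finset.sum_congr rfl fun i _ => ?_
      rw [hσstar, KaehlerDifferential.mvPolynomialBasis_apply]
      by_cases hi : i = j₀
      · rw [hi, hcfj, hσ', hDζ, smul_smul, mul_comm (σ (a j₀)) (C ζ)]
      · rw [hcfi i hi, hσ i hi]
    have hfun : cf = a := by
      have h1 : B.repr (∑ i, cf i • B i) = B.repr (∑ i, a i • B i) := by
        rw [← hσω, ← hω, hinv]
      have h2 := congrArg (DFunLike.coe
        (F := (Fin n →₀ MvPolynomial (Fin n) k))) h1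
      rwa [B.repr_sum_self, B.repr_sum_self] at h2
    have hfix : ∀ i, i ≠ j₀ → σ (a i) = a i := by
      intro i hi
      have h := congrFun hfun i
      rwa [hcfi i hi] at h
    have hj : C ζ * σ (a j₀) = a j₀ := by
      have h := congrFun hfun j₀
      rwa [hcfj] at h
    obtain ⟨c, hac, hσc⟩ := stmt7_factor hr hζ j₀ σ hσ hσ' (a j₀) hj
    refine ⟨Function.update a j₀ (C ((r : k)⁻¹) * c), ?_, ?_⟩
    · intro i
      by_cases hi : i = j₀
      · rw [hi, Function.update_self, map_mul, hσc,
          show (C ((r : k)⁻¹) : MvPolynomial (Fin n) k)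
              = algebraMap k (MvPolynomial (Fin n) k) ((r : k)⁻¹) from rfl,
          σ.commutes]
      · rw [Function.update_of_ne hi]
        exact hfix i hi
    · have hsum : ω = (∑ i ∈ Finset.univ.erase j₀, a i • D (X i)) + a j₀ • D (X j₀) := by
        rw [hω', ← Finset.sum_erase_add _ _ (Finset.mem_univ j₀)]
      rw [hsum]
      congr 1
      · refine Finset.sum_congr rfl fun i hi => ?_
        rw [Function.update_of_ne (Finset.ne_of_mem_erase hi)]
      · rw [Function.update_self, Derivation.leibniz_pow, hac,
          ← Nat.cast_smul_eq_nsmul (MvPolynomial (Fin n) k), smul_smul, smul_smul]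
        congr 1
        have h5 : (C ((r : k)⁻¹) : MvPolynomial (Fin n) k) * C ((r : k)) = 1 := by
          rw [← C_mul, inv_mul_cancel₀ hrk.out, map_one]
        calc X j₀ ^ (r - 1) * c
            = (C ((r : k)⁻¹) * C ((r : k))) * (X j₀ ^ (r - 1) * c) := by
              rw [h5, one_mul]
          _ = C ((r : k)⁻¹) * c * ((r : ℕ) : MvPolynomial (Fin n) k) * X j₀ ^ (r - 1) := by
              rw [← map_natCast (C : k →+* MvPolynomial (Fin n) k) r]; ring
  · rintro ⟨b, hbinv, rfl⟩
    rw [map_add, map_sum]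
    congr 1
    · refine Finset.sum_congr rfl fun i hi => ?_
      rw [hσstar, hbinv, hσ i (Finset.ne_of_mem_erase hi)]
    · rw [hσstar, hbinv, hσXr]
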